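/- The function ψ is a solution of the homogeneous ordinary differential equation associated with the resolvent of the Ornstein–Uhlenbeck generator: for every x ∈ ℝ, (σ²/2)·ψ''(x) + k(μ − x)·ψ'(x) − ρ·ψ(x) = 0. -/

import Mathlib

noncomputable section

open MeasureTheory

/-- The increasing fundamental solution `ψ` of the Ornstein–Uhlenbeck resolvent equation:
`ψ(x) = (1/Γ(ρ/k)) ∫₀^∞ t^{ρ/k − 1} exp(−t²/2 + ((x − μ)√(2k)/σ) t) dt`. -/
def psi (ρ k σ μ : ℝ) (x : ℝ) : ℝ :=
  (1 / Real.Gamma (ρ / k)) *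
    ∫ t in Set.Ioi (0 : ℝ),
      t ^ (ρ / k - 1) * Real.exp (-t ^ 2 / 2 + ((x - μ) * Real.sqrt (2 * k) / σ) * t)

open Filter

def Ifun (p c : ℝ) : ℝ := ∫ t in Set.Ioi (0:ℝ), t ^ p * Real.exp (-t ^ 2 / 2 + c * t)

lemma integrableI {p : ℝ} (hp : -1 < p) (c : ℝ) :
    IntegrableOn (fun t : ℝ => t ^ p * Real.exp (-t ^ 2 / 2 + c * t)) (Set.Ioi 0) := by
  have base : IntegrableOn
      (fun t : ℝ => Real.exp (c ^ 2) * (t ^ p * Real.exp (-(1/4 : ℝ) * t ^ 2)))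
      (Set.Ioi 0) :=
    (integrableOn_rpow_mul_exp_neg_mul_sq (by norm_num) hp).const_mul _
  apply base.mono'
  · exact Measurable.aestronglyMeasurable (by fun_prop)
  · filter_upwards [ae_restrict_mem measurableSet_Ioi] with t ht
    have ht' : (0:ℝ) < t := ht
    have h1 : 0 ≤ t ^ p := Real.rpow_nonneg ht'.le p
    rw [Real.norm_eq_abs, abs_mul, abs_of_nonneg h1, abs_of_nonneg (Real.exp_pos _).le]
    rw [mul_comm (Real.exp _) _, mul_assoc, ← Real.exp_add]
    apply mul_le_mul_of_nonneg_left _ h1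
    apply Real.exp_le_exp.2
    nlinarith [sq_nonneg (c - t/2)]

lemma hasDerivI {p : ℝ} (hp : -1 < p) (c : ℝ) :
    HasDerivAt (fun c => Ifun p c) (Ifun (p+1) c) c := by
  have hp1 : (-1:ℝ) < p + 1 := by linarith
  have key := hasDerivAt_integral_of_dominated_loc_of_deriv_le
    (F := fun c (t:ℝ) => t ^ p * Real.exp (-t ^ 2 / 2 + c * t))
    (F' := fun c (t:ℝ) => t ^ (p+1) * Real.exp (-t ^ 2 / 2 + c * t))
    (μ := volume.restrict (Set.Ioi (0:ℝ))) (x₀ := c)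
    (bound := fun t => t ^ (p+1) * Real.exp (-t ^ 2 / 2 + (|c|+1) * t))
    (s := Metric.ball c 1) (Metric.ball_mem_nhds c one_pos)
    (Eventually.of_forall fun x => Measurable.aestronglyMeasurable (by fun_prop))
    (integrableI hp c)
    (Measurable.aestronglyMeasurable (by fun_prop))
    (by
      filter_upwards [ae_restrict_mem measurableSet_Ioi] with t ht x hx
      have ht' : (0:ℝ) < t := ht
      have h1 : 0 ≤ t ^ (p+1) := Real.rpow_nonneg ht'.le _
      rw [Real.norm_eq_abs, abs_mul, abs_of_nonneg h1, abs_of_nonneg (Real.exp_pos _).le]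
      apply mul_le_mul_of_nonneg_left _ h1
      apply Real.exp_le_exp.2
      have hxc : |x - c| < 1 := by simpa [Real.dist_eq] using hx
      have hx1 : x ≤ |c| + 1 := by
        have h2 := abs_sub_abs_le_abs_sub x c
        have h3 := le_abs_self x
        linarith
      nlinarith)
    (integrableI hp1 (|c|+1))
    (by
      filter_upwards [ae_restrict_mem measurableSet_Ioi] with t ht x hx
      have ht' : (0:ℝ) < t := ht
      have h0 : HasDerivAt (fun x : ℝ => -t ^ 2 / 2 + x * t) t x := by
        simpa using ((hasDerivAt_id x).mul_const t).const_add (-t ^ 2 / 2)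
      have h1 : HasDerivAt (fun x : ℝ => t ^ p * Real.exp (-t ^ 2 / 2 + x * t))
          (t ^ p * (Real.exp (-t ^ 2 / 2 + x * t) * t)) x := (h0.exp).const_mul _
      refine h1.congr_deriv ?_
      rw [Real.rpow_add_one ht'.ne', mul_comm (t ^ p) t]
      ring)
  exact key.2

lemma key_IBP {ν : ℝ} (hν : 0 < ν) (c : ℝ) :
    Ifun (ν+1) c = c * Ifun ν c + ν * Ifun (ν-1) c := by
  have hνm : (-1:ℝ) < ν - 1 := by linarith
  have hν0 : (-1:ℝ) < ν := by linarith
  have hν1 : (-1:ℝ) < ν + 1 := by linarith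
  set f : ℝ → ℝ := fun t => t ^ ν * Real.exp (-t ^ 2 / 2 + c * t) with hf
  set f' : ℝ → ℝ := fun t => ν * (t ^ (ν-1) * Real.exp (-t ^ 2 / 2 + c * t))
      + c * (t ^ ν * Real.exp (-t ^ 2 / 2 + c * t))
      - t ^ (ν+1) * Real.exp (-t ^ 2 / 2 + c * t) with hf'
  have hcont : ContinuousWithinAt f (Set.Ici 0) 0 := by
    apply ContinuousAt.continuousWithinAt
    exact ((Real.continuousAt_rpow_const 0 ν (Or.inr hν.le)).mul (by fun_prop))
  have hderiv : ∀ t ∈ Set.Ioi (0:ℝ), HasDerivAt f (f' t) t := by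
    intro t ht
    have ht' : (0:ℝ) < t := ht
    have h0 : HasDerivAt (fun t : ℝ => -t ^ 2 / 2 + c * t) (-t + c) t := by
      have ha : HasDerivAt (fun t : ℝ => -t ^ 2 / 2) (-t) t := by
        have := ((hasDerivAt_pow 2 t).neg.div_const 2)
        refine this.congr_deriv ?_
        ring
      exact (ha.add ((hasDerivAt_id t).const_mul c)).congr_deriv (by ring)
    have h1 : HasDerivAt (fun t : ℝ => t ^ ν) (ν * t ^ (ν-1)) t :=
      Real.hasDerivAt_rpow_const (Or.inl ht'.ne')
    have h2 := h1.mul h0.exp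
    refine h2.congr_deriv ?_
    have h3 : t ^ ν * t = t ^ (ν+1) := (Real.rpow_add_one ht'.ne' ν).symm
    simp only [hf']
    rw [← h3]
    ring
  have int1 : Integrable (fun t : ℝ => ν * (t ^ (ν-1) * Real.exp (-t ^ 2 / 2 + c * t)))
      (volume.restrict (Set.Ioi 0)) := (integrableI hνm c).const_mul ν
  have int2 : Integrable (fun t : ℝ => c * (t ^ ν * Real.exp (-t ^ 2 / 2 + c * t)))
      (volume.restrict (Set.Ioi 0)) := (integrableI hν0 c).const_mul c
  have int3 : Integrable (fun t : ℝ => t ^ (ν+1) * Real.exp (-t ^ 2 / 2 + c * t))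
      (volume.restrict (Set.Ioi 0)) := integrableI hν1 c
  have int12 : Integrable (fun t : ℝ => ν * (t ^ (ν-1) * Real.exp (-t ^ 2 / 2 + c * t))
      + c * (t ^ ν * Real.exp (-t ^ 2 / 2 + c * t))) (volume.restrict (Set.Ioi 0)) :=
    int1.add int2
  have hint : IntegrableOn f' (Set.Ioi 0) := int12.sub int3
  have htend : Tendsto f atTop (nhds 0) := by
    have hO := rpow_mul_exp_neg_mul_sq_isLittleO_exp_neg (by norm_num : (0:ℝ) < 1/4) ν
    have hexp : Tendsto (fun x : ℝ => Real.exp (-(1/2) * x)) atTop (nhds 0) := by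
      have := Real.tendsto_exp_neg_atTop_nhds_zero.comp
        (tendsto_id.const_mul_atTop (by norm_num : (0:ℝ) < 1/2))
      simpa [Function.comp_def, neg_mul] using this
    have h2 : Tendsto (fun t : ℝ => Real.exp (c^2) * (t ^ ν * Real.exp (-(1/4:ℝ) * t ^ 2)))
        atTop (nhds 0) := by
      simpa using (hO.tendsto_zero_of_tendsto hexp).const_mul (Real.exp (c^2))
    apply squeeze_zero_norm' _ h2
    filter_upwards [eventually_gt_atTop (0:ℝ)] with t ht
    have h1 : 0 ≤ t ^ ν := Real.rpow_nonneg ht.le _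
    rw [Real.norm_eq_abs, abs_mul, abs_of_nonneg h1, abs_of_nonneg (Real.exp_pos _).le]
    rw [mul_comm (Real.exp _) _, mul_assoc, ← Real.exp_add]
    apply mul_le_mul_of_nonneg_left _ h1
    apply Real.exp_le_exp.2
    nlinarith [sq_nonneg (c - t/2)]
  have heq := integral_Ioi_of_hasDerivAt_of_tendsto hcont hderiv hint htend
  have hf0 : f 0 = 0 := by simp [hf, Real.zero_rpow hν.ne']
  rw [hf0, sub_zero] at heq
  have hsplit : (∫ t in Set.Ioi (0:ℝ), f' t) =
      ν * Ifun (ν-1) c + c * Ifun ν c - Ifun (ν+1) c := by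
    rw [hf']
    rw [integral_sub int12 int3, integral_add int1 int2, integral_const_mul,
      integral_const_mul]
    rfl
  rw [hsplit] at heq
  linarith

/-- `ψ` solves the homogeneous ODE associated with the resolvent of the
Ornstein–Uhlenbeck generator: `(σ²/2)ψ'' + k(μ − x)ψ' − ρψ = 0`. -/
theorem stmt9 (ρ k σ μ : ℝ) (hρ : 0 < ρ) (hk : 0 < k) (hσ : 0 < σ) (x : ℝ) :
    σ ^ 2 / 2 * deriv (deriv (psi ρ k σ μ)) x + k * (μ - x) * deriv (psi ρ k σ μ) x
      - ρ * psi ρ k σ μ x = 0 := by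

  have hν : 0 < ρ / k := div_pos hρ hk
  have hν1 : (-1:ℝ) < ρ / k - 1 := by linarith
  have hν0 : (-1:ℝ) < ρ / k := by linarith
  set s : ℝ := Real.sqrt (2 * k) with hs
  have hpsi : psi ρ k σ μ = fun y =>
      (1 / Real.Gamma (ρ / k)) * Ifun (ρ / k - 1) ((y - μ) * s / σ) := rfl
  have hinner : ∀ y : ℝ, HasDerivAt (fun y : ℝ => (y - μ) * s / σ) (s / σ) y := by
    intro y
    simpa using (((hasDerivAt_id y).sub_const μ).mul_const s).div_const σ
  have hD1 : ∀ y : ℝ, HasDerivAt (psi ρ k σ μ)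
      ((1 / Real.Gamma (ρ / k)) * (Ifun (ρ / k) ((y - μ) * s / σ) * (s / σ))) y := by
    intro y
    have houter := hasDerivI hν1 ((y - μ) * s / σ)
    rw [show ρ / k - 1 + 1 = ρ / k by ring] at houter
    have := (houter.comp y (hinner y)).const_mul (1 / Real.Gamma (ρ / k))
    rw [hpsi]
    exact this
  have hd1 : deriv (psi ρ k σ μ) = fun y =>
      (1 / Real.Gamma (ρ / k)) * (Ifun (ρ / k) ((y - μ) * s / σ) * (s / σ)) :=
    funext fun y => (hD1 y).deriv
  have hD2 : HasDerivAt (fun y =>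
      (1 / Real.Gamma (ρ / k)) * (Ifun (ρ / k) ((y - μ) * s / σ) * (s / σ)))
      ((1 / Real.Gamma (ρ / k)) * (Ifun (ρ / k + 1) ((x - μ) * s / σ) * (s / σ) * (s / σ))) x := by
    have houter := hasDerivI hν0 ((x - μ) * s / σ)
    exact ((houter.comp x (hinner x)).mul_const (s / σ)).const_mul _
  have hd2 : deriv (deriv (psi ρ k σ μ)) x =
      (1 / Real.Gamma (ρ / k)) * (Ifun (ρ / k + 1) ((x - μ) * s / σ) * (s / σ) * (s / σ)) := by
    rw [hd1]
    exact hD2.deriv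
  rw [hd2, hd1, hpsi]
  beta_reduce
  rw [key_IBP hν ((x - μ) * s / σ)]
  have hsq : s ^ 2 = 2 * k := Real.sq_sqrt (by positivity)
  have hσ' : σ ≠ 0 := hσ.ne'
  have hk' : k ≠ 0 := hk.ne'
  have hkν : k * (ρ / k) = ρ := by field_simp
  clear_value s
  clear hs hinner hpsi hD1 hd1 hD2 hd2
  generalize Ifun (ρ / k - 1) ((x - μ) * s / σ) = Im
  generalize Ifun (ρ / k) ((x - μ) * s / σ) = I0
  have hΓ : Real.Gamma (ρ / k) ≠ 0 := (Real.Gamma_pos_of_pos hν).ne'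
  generalize Real.Gamma (ρ / k) = Γv at hΓ ⊢
  generalize hr : ρ / k = r at hkν ⊢
  have hsq3 : s ^ 3 = 2 * k * s := by rw [pow_succ, hsq]
  field_simp
  linear_combination (x-μ)*I0 * hsq3 + σ*r*Im * hsq + 2*σ*Im * hkν
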